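/- In the (1:K_m)-biased triangle game on K_n (Maker moving first), if m ≥ 4√n then Breaker has a winning strategy. -/

import Mathlib

open Finset

/-- A position in a Maker–Breaker game on the edge set of `K_n`:
`M` is the set of edges claimed by Maker, `B` those claimed by Breaker. -/
structure MBPos (n : ℕ) where
  M : Finset (Sym2 (Fin n))
  B : Finset (Sym2 (Fin n))

/-- The board: the edge set of the complete graph `K_n`, i.e. all
non-diagonal unordered pairs of vertices. -/
def board (n : ℕ) : Finset (Sym2 (Fin n)) :=
  Finset.univ.filter (fun e => ¬ e.IsDiag)

/-- Maker claims edge `e` if it is a previously unclaimed edge of the board;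
an illegal choice leaves the position unchanged (this never helps Maker,
whose goal is monotone in her set of edges). -/
def makerMove {n : ℕ} (p : MBPos n) (e : Sym2 (Fin n)) : MBPos n :=
  if e ∈ board n ∧ e ∉ p.M ∧ e ∉ p.B then ⟨insert e p.M, p.B⟩ else p

/-- Breaker claims the set `S` of edges. -/
def breakerMove {n : ℕ} (p : MBPos n) (S : Finset (Sym2 (Fin n))) : MBPos n :=
  ⟨p.M, p.B ∪ S⟩

/-- A Breaker strategy `bs` is legal for the bias-structure predicate `ok` if at every
position it claims a set of previously unclaimed edges of the board satisfying `ok`. -/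
def LegalBreaker {n : ℕ} (ok : Finset (Sym2 (Fin n)) → Prop)
    (bs : MBPos n → Finset (Sym2 (Fin n))) : Prop :=
  ∀ p : MBPos n, bs p ⊆ board n ∧ (∀ e ∈ bs p, e ∉ p.M ∧ e ∉ p.B) ∧ ok (bs p)

/-- The sequence of positions (one per half-move) when Breaker moves first:
at even steps Breaker moves, at odd steps Maker moves. -/
def playBF {n : ℕ} (ms : MBPos n → Sym2 (Fin n)) (bs : MBPos n → Finset (Sym2 (Fin n))) :
    ℕ → MBPos n
  | 0 => ⟨∅, ∅⟩
  | k + 1 =>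
    let p := playBF ms bs k
    if k % 2 = 0 then breakerMove p (bs p) else makerMove p (ms p)

/-- The sequence of positions (one per half-move) when Maker moves first:
at even steps Maker moves, at odd steps Breaker moves. -/
def playMF {n : ℕ} (ms : MBPos n → Sym2 (Fin n)) (bs : MBPos n → Finset (Sym2 (Fin n))) :
    ℕ → MBPos n
  | 0 => ⟨∅, ∅⟩
  | k + 1 =>
    let p := playMF ms bs k
    if k % 2 = 0 then makerMove p (ms p) else breakerMove p (bs p)

/-- Maker (moving second, Breaker first) has a winning strategy: some Maker strategy
guarantees, against every legal Breaker strategy, that at some point Maker's claimed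
edges satisfy the winning predicate `win`. -/
def MakerWinsBF {n : ℕ} (ok : Finset (Sym2 (Fin n)) → Prop)
    (win : Finset (Sym2 (Fin n)) → Prop) : Prop :=
  ∃ ms, ∀ bs, LegalBreaker ok bs → ∃ t, win (playBF ms bs t).M

/-- Maker (moving first) has a winning strategy. -/
def MakerWinsMF {n : ℕ} (ok : Finset (Sym2 (Fin n)) → Prop)
    (win : Finset (Sym2 (Fin n)) → Prop) : Prop :=
  ∃ ms, ∀ bs, LegalBreaker ok bs → ∃ t, win (playMF ms bs t).M

/-- Breaker (moving second, Maker first) has a winning strategy: some legal Breaker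
strategy guarantees that Maker's claimed edges never satisfy `win`. -/
def BreakerWinsMF {n : ℕ} (ok : Finset (Sym2 (Fin n)) → Prop)
    (win : Finset (Sym2 (Fin n)) → Prop) : Prop :=
  ∃ bs, LegalBreaker ok bs ∧ ∀ ms, ∀ t, ¬ win (playMF ms bs t).M

/-- Breaker (moving first) has a winning strategy. -/
def BreakerWinsBF {n : ℕ} (ok : Finset (Sym2 (Fin n)) → Prop)
    (win : Finset (Sym2 (Fin n)) → Prop) : Prop :=
  ∃ bs, LegalBreaker ok bs ∧ ∀ ms, ∀ t, ¬ win (playBF ms bs t).M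

/-- `(1:K_m)` clique bias: the claimed edges all have their endpoints inside a
single set of at most `m` vertices (i.e. they form a subgraph of a copy of `K_m`). -/
def CliqueBias {n : ℕ} (m : ℕ) (S : Finset (Sym2 (Fin n))) : Prop :=
  ∃ V : Finset (Fin n), V.card ≤ m ∧ ∀ e ∈ S, ∀ v : Fin n, v ∈ e → v ∈ V

/-- `(1:E_b)` matching bias: at most `b` pairwise vertex-disjoint edges. -/
def MatchingBias {n : ℕ} (b : ℕ) (S : Finset (Sym2 (Fin n))) : Prop :=
  S.card ≤ b ∧ ∀ e ∈ S, ∀ f ∈ S, e ≠ f → ∀ v : Fin n, v ∈ e → v ∉ f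

/-- `(1:S_b)` star bias: at most `b` edges sharing a common endpoint (the center). -/
def StarBias {n : ℕ} (b : ℕ) (S : Finset (Sym2 (Fin n))) : Prop :=
  S.card ≤ b ∧ ∃ v : Fin n, ∀ e ∈ S, v ∈ e

/-- Winning predicate for the triangle game: Maker's edges contain a triangle. -/
def TriangleWin {n : ℕ} (M : Finset (Sym2 (Fin n))) : Prop :=
  ∃ u v w : Fin n, u ≠ v ∧ u ≠ w ∧ v ≠ w ∧
    s(u, v) ∈ M ∧ s(u, w) ∈ M ∧ s(v, w) ∈ M

/-- Winning predicate for the connectivity game: Maker's edges form a connected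
spanning subgraph of `K_n`. -/
def ConnWin {n : ℕ} (M : Finset (Sym2 (Fin n))) : Prop :=
  (SimpleGraph.fromEdgeSet (M : Set (Sym2 (Fin n)))).Connected

/-- Winning predicate for the Hamiltonicity game: Maker's edges contain a
Hamilton cycle. -/
def HamWin {n : ℕ} (M : Finset (Sym2 (Fin n))) : Prop :=
  ∃ (a : Fin n) (p : (SimpleGraph.fromEdgeSet (M : Set (Sym2 (Fin n)))).Walk a a),
    p.IsHamiltonianCycle

/-- The degree of vertex `v` in the graph given by the edge set `E`. -/
def degIn {n : ℕ} (E : Finset (Sym2 (Fin n))) (v : Fin n) : ℕ :=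
  (E.filter (fun e => v ∈ e)).card

namespace CBT

variable {n : ℕ}

/-- neighbors of `x` in edge set `E`. -/
def Nbr (E : Finset (Sym2 (Fin n))) (x : Fin n) : Finset (Fin n) :=
  univ.filter (fun y => y ≠ x ∧ s(x,y) ∈ E)

/-- free neighbors of `x` in position `p`. -/
def FNbr (p : MBPos n) (x : Fin n) : Finset (Fin n) :=
  univ.filter (fun y => y ≠ x ∧ s(x,y) ∉ p.M ∧ s(x,y) ∉ p.B)

lemma mem_Nbr {E : Finset (Sym2 (Fin n))} {x y : Fin n} :
    y ∈ Nbr E x ↔ y ≠ x ∧ s(x,y) ∈ E := by simp [Nbr]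

lemma mem_FNbr {p : MBPos n} {x y : Fin n} :
    y ∈ FNbr p x ↔ y ≠ x ∧ s(x,y) ∉ p.M ∧ s(x,y) ∉ p.B := by simp [FNbr]

def Inv (q : ℕ) (p : MBPos n) : Prop :=
  (∀ e ∈ p.B, e ∉ p.M) ∧
  p.M ⊆ board n ∧
  p.B ⊆ board n ∧
  (∀ a x y : Fin n, x ≠ y → s(a,x) ∈ p.M → s(a,y) ∈ p.M → s(x,y) ∈ p.B) ∧
  (∀ x : Fin n, FNbr p x = ∅ ∨ (q-1) * (Nbr p.M x).card ≤ (Nbr p.B x).card)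

/-- open closing edges. -/
def OCset (p : MBPos n) : Finset (Sym2 (Fin n)) :=
  (board n).filter (fun c => c ∉ p.M ∧ c ∉ p.B ∧
    ∃ a x y : Fin n, x ≠ y ∧ c = s(x,y) ∧ s(a,x) ∈ p.M ∧ s(a,y) ∈ p.M)

def OCverts (p : MBPos n) : Finset (Fin n) :=
  univ.filter (fun z => ∃ c ∈ OCset p, z ∈ c)

def Deficient (q : ℕ) (p : MBPos n) (x : Fin n) : Prop :=
  (FNbr p x).Nonempty ∧ (Nbr p.B x).card < (q-1) * (Nbr p.M x).card

instance (q : ℕ) (p : MBPos n) : DecidablePred (Deficient q p) := fun x => by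
  unfold Deficient; infer_instance

noncomputable def FxSet (q : ℕ) (p : MBPos n) (x : Fin n) : Finset (Fin n) :=
  if h : (FNbr p x).card ≤ q - 1 then FNbr p x
  else (Finset.exists_subset_card_eq (s := FNbr p x) (n := q-1) (by omega)).choose

lemma FxSet_subset (q : ℕ) (p : MBPos n) (x : Fin n) : FxSet q p x ⊆ FNbr p x := by
  unfold FxSet
  split
  · exact Finset.Subset.refl _
  · exact (Finset.exists_subset_card_eq (s := FNbr p x) (n := q-1) (by omega)).choose_spec.1

lemma FxSet_card_le (q : ℕ) (p : MBPos n) (x : Fin n) : (FxSet q p x).card ≤ q - 1 := by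
  unfold FxSet
  split
  · assumption
  · exact le_of_eq (Finset.exists_subset_card_eq (s := FNbr p x) (n := q-1) (by omega)).choose_spec.2

lemma FxSet_card_big {q : ℕ} {p : MBPos n} {x : Fin n} (h : ¬ (FNbr p x).card ≤ q - 1) :
    (FxSet q p x).card = q - 1 := by
  unfold FxSet
  rw [dif_neg h]
  exact (Finset.exists_subset_card_eq (s := FNbr p x) (n := q-1) (by omega)).choose_spec.2

lemma FxSet_small {q : ℕ} {p : MBPos n} {x : Fin n} (h : (FNbr p x).card ≤ q - 1) :
    FxSet q p x = FNbr p x := dif_pos h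

noncomputable def Wset (q : ℕ) (p : MBPos n) : Finset (Fin n) :=
  OCverts p ∪ (univ.filter (Deficient q p)).biUnion (fun x => insert x (FxSet q p x))

noncomputable def bstrat (q m : ℕ) (p : MBPos n) : Finset (Sym2 (Fin n)) :=
  if (Wset q p).card ≤ m then
    (board n).filter (fun e => e ∉ p.M ∧ e ∉ p.B ∧ ∀ z ∈ e, z ∈ Wset q p)
  else ∅

lemma bstrat_subset (q m : ℕ) (p : MBPos n) : bstrat q m p ⊆ board n := by
  unfold bstrat; split
  · exact Finset.filter_subset _ _
  · exact Finset.empty_subset _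

lemma bstrat_free (q m : ℕ) (p : MBPos n) : ∀ e ∈ bstrat q m p, e ∉ p.M ∧ e ∉ p.B := by
  unfold bstrat; split
  · intro e he
    have := Finset.mem_filter.mp he
    exact ⟨this.2.1, this.2.2.1⟩
  · intro e he; simp at he

lemma bstrat_bias (q m : ℕ) (p : MBPos n) : CliqueBias m (bstrat q m p) := by
  unfold bstrat; split
  · exact ⟨Wset q p, by assumption, fun e he v hv => (Finset.mem_filter.mp he).2.2.2 v hv⟩
  · exact ⟨∅, by simp, by simp⟩

/-- the three neighborhood sets partition (as a sub-partition) the other vertices -/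
lemma deg_sum (p : MBPos n) (hMB : ∀ e ∈ p.B, e ∉ p.M) (x : Fin n) :
    (Nbr p.M x).card + (Nbr p.B x).card + (FNbr p x).card ≤ n - 1 := by
  have hd1 : Disjoint (Nbr p.M x) (Nbr p.B x) := by
    rw [Finset.disjoint_left]
    intro y hy hy'
    exact hMB _ (mem_Nbr.mp hy').2 (mem_Nbr.mp hy).2
  have hd2 : Disjoint (Nbr p.M x ∪ Nbr p.B x) (FNbr p x) := by
    rw [Finset.disjoint_left]
    intro y hy hy'
    have h' := mem_FNbr.mp hy'
    rcases Finset.mem_union.mp hy with h | h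
    · exact h'.2.1 (mem_Nbr.mp h).2
    · exact h'.2.2 (mem_Nbr.mp h).2
  have hsub : (Nbr p.M x ∪ Nbr p.B x) ∪ FNbr p x ⊆ univ.erase x := by
    intro y hy
    rcases Finset.mem_union.mp hy with h | h
    · rcases Finset.mem_union.mp h with h | h
      · exact Finset.mem_erase.mpr ⟨(mem_Nbr.mp h).1, Finset.mem_univ _⟩
      · exact Finset.mem_erase.mpr ⟨(mem_Nbr.mp h).1, Finset.mem_univ _⟩
    · exact Finset.mem_erase.mpr ⟨(mem_FNbr.mp h).1, Finset.mem_univ _⟩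
  have := Finset.card_le_card hsub
  rw [Finset.card_union_of_disjoint hd2, Finset.card_union_of_disjoint hd1] at this
  simpa using this

lemma tri_free_of_inv {q : ℕ} {p : MBPos n} (hp : Inv q p) : ¬ TriangleWin p.M := by
  rintro ⟨a, b, c, hab, hac, hbc, h1, h2, h3⟩
  exact hp.1 _ (hp.2.2.2.1 a b c hbc h1 h2) h3

lemma OCset_empty_of_inv {q : ℕ} {p : MBPos n} (hp : Inv q p) : OCset p = ∅ := by
  rw [Finset.eq_empty_iff_forall_notMem]
  intro c hc
  obtain ⟨hb, hM, hB, a, x, y, hxy, rfl, h1, h2⟩ := Finset.mem_filter.mp hc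
  exact hB (hp.2.2.2.1 a x y hxy h1 h2)

lemma Wset_empty_of_inv {q : ℕ} {p : MBPos n} (hp : Inv q p) : Wset q p = ∅ := by
  unfold Wset
  rw [Finset.union_eq_empty]
  constructor
  · rw [Finset.eq_empty_iff_forall_notMem]
    intro z hz
    obtain ⟨-, c, hc, -⟩ := Finset.mem_filter.mp hz
    rw [OCset_empty_of_inv hp] at hc
    simp at hc
  · rw [Finset.eq_empty_iff_forall_notMem]
    intro z hz
    simp only [Finset.mem_biUnion, Finset.mem_filter] at hz
    obtain ⟨x, ⟨-, hdef⟩, -⟩ := hz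
    rcases hp.2.2.2.2 x with h | h
    · exact absurd h (Finset.nonempty_iff_ne_empty.mp hdef.1)
    · exact absurd h (Nat.not_le.mpr hdef.2)

lemma bstrat_of_inv {q m : ℕ} {p : MBPos n} (hp : Inv q p) : bstrat q m p = ∅ := by
  unfold bstrat
  have hW := Wset_empty_of_inv (q := q) hp
  split
  · rw [Finset.eq_empty_iff_forall_notMem]
    intro e he
    obtain ⟨-, -, -, hv⟩ := Finset.mem_filter.mp he
    have := hv _ (Sym2.out_fst_mem e)
    rw [hW] at this
    simp at this
  · rfl

lemma cherry_closed {q : ℕ} {p : MBPos n} (hp : Inv q p) {a b c : Fin n} (hab : a ≠ b)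
    (h1 : s(a,c) ∈ p.M) (h2 : s(b,c) ∈ p.M) : s(a,b) ∈ p.B := by
  apply hp.2.2.2.1 c a b hab
  · rw [Sym2.eq_swap]; exact h1
  · rw [Sym2.eq_swap]; exact h2

lemma neq_of_memM {q : ℕ} {p : MBPos n} (hp : Inv q p) {a b : Fin n} (h : s(a,b) ∈ p.M) :
    a ≠ b := by
  intro hab
  subst hab
  have := hp.2.1 h
  simp [board, Sym2.mk_isDiag_iff] at this

lemma tri_free_maker {q : ℕ} {p : MBPos n} (hp : Inv q p) (e : Sym2 (Fin n)) :
    ¬ TriangleWin (makerMove p e).M := by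
  unfold makerMove
  split
  · rename_i hleg
    rintro ⟨a, b, c, hab, hac, hbc, h1, h2, h3⟩
    simp only [Finset.mem_insert] at h1 h2 h3
    -- a triangle in `insert e p.M`
    rcases h1 with h1 | h1
    · -- e = s(a,b); then s(a,c), s(b,c) ∈ p.M
      rcases h2 with h2 | h2
      · rw [← h1] at h2
        rcases Sym2.eq_iff.mp h2 with ⟨-, h⟩ | ⟨h, -⟩
        · exact hbc h.symm
        · exact hab h
      rcases h3 with h3 | h3
      · rw [← h1] at h3
        rcases Sym2.eq_iff.mp h3 with ⟨h, -⟩ | ⟨-, h⟩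
        · exact hab h.symm
        · exact hac h.symm
      exact hleg.2.2 (h1 ▸ cherry_closed hp hab h2 h3)
    · rcases h2 with h2 | h2
      · -- e = s(a,c)
        rcases h3 with h3 | h3
        · rw [← h2] at h3
          rcases Sym2.eq_iff.mp h3 with ⟨h, -⟩ | ⟨h, -⟩
          · exact hab h.symm
          · exact hbc h
        have : s(a,c) ∈ p.B := by
          apply hp.2.2.2.1 b a c hac
          · rw [Sym2.eq_swap]; exact h1
          · exact h3
        exact hleg.2.2 (h2 ▸ this)
      · rcases h3 with h3 | h3
        · -- e = s(b,c)
          have : s(b,c) ∈ p.B := hp.2.2.2.1 a b c hbc h1 h2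
          exact hleg.2.2 (h3 ▸ this)
        · exact tri_free_of_inv hp ⟨a, b, c, hab, hac, hbc, h1, h2, h3⟩
  · exact tri_free_of_inv hp

lemma Nbr_mono {E E' : Finset (Sym2 (Fin n))} (h : E ⊆ E') (x : Fin n) :
    Nbr E x ⊆ Nbr E' x := by
  intro y hy
  rw [mem_Nbr] at hy ⊢
  exact ⟨hy.1, h hy.2⟩

lemma step (q m : ℕ) (hq : 1 ≤ q) (hm : 2 * ((n-2)/q) + 2*q ≤ m)
    (p : MBPos n) (hp : Inv q p) (e : Sym2 (Fin n)) :
    Inv q (breakerMove (makerMove p e) (bstrat q m (makerMove p e))) := by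
  induction e using Sym2.ind with
  | _ u v =>
  by_cases hleg : s(u,v) ∈ board n ∧ s(u,v) ∉ p.M ∧ s(u,v) ∉ p.B
  swap
  · rw [makerMove, if_neg hleg, bstrat_of_inv hp]
    show Inv q ⟨p.M, p.B ∪ ∅⟩
    rw [Finset.union_empty]
    exact hp
  rw [makerMove, if_pos hleg]
  obtain ⟨hbd, heM, heB⟩ := hleg
  have huv : u ≠ v := by
    simp only [board, Finset.mem_filter, Finset.mem_univ, true_and,
      Sym2.mk_isDiag_iff] at hbd
    exact hbd
  obtain ⟨hMB, hMb, hBb, hch, hd⟩ := hp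
  set P1 : MBPos n := ⟨insert s(u,v) p.M, p.B⟩ with hP1
  set S : Finset (Sym2 (Fin n)) := bstrat q m P1 with hSdef
  show Inv q ⟨P1.M, p.B ∪ S⟩
  -- basic facts
  have hsymm : ∀ a b : Fin n, s(a,b) = s(u,v) → a ≠ b := by
    intro a b hab
    rcases Sym2.eq_iff.mp hab with ⟨rfl, rfl⟩ | ⟨rfl, rfl⟩
    · exact huv
    · exact huv.symm
  -- new Maker neighborhoods
  have hMN : ∀ a b : Fin n, s(a,b) = s(u,v) → Nbr P1.M a = insert b (Nbr p.M a) := by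
    intro a b hab
    have hne := hsymm a b hab
    ext y
    simp only [mem_Nbr, hP1, Finset.mem_insert]
    constructor
    · rintro ⟨hy, hy2 | hy2⟩
      · rw [← hab] at hy2
        rcases Sym2.eq_iff.mp hy2 with ⟨-, rfl⟩ | ⟨h1, -⟩
        · exact Or.inl rfl
        · exact absurd h1 hne
      · exact Or.inr ⟨hy, hy2⟩
    · rintro (rfl | ⟨hy, hy2⟩)
      · exact ⟨hne.symm, Or.inl hab⟩
      · exact ⟨hy, Or.inr hy2⟩
  have hMNx : ∀ x : Fin n, x ≠ u → x ≠ v → Nbr P1.M x = Nbr p.M x := by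
    intro x hxu hxv
    ext y
    simp only [mem_Nbr, hP1, Finset.mem_insert]
    constructor
    · rintro ⟨hy, hy2 | hy2⟩
      · rcases Sym2.eq_iff.mp hy2 with ⟨h1, -⟩ | ⟨h1, -⟩
        · exact absurd h1 hxu
        · exact absurd h1 hxv
      · exact ⟨hy, hy2⟩
    · rintro ⟨hy, hy2⟩
      exact ⟨hy, Or.inr hy2⟩
  have hbFN : ∀ a b : Fin n, s(a,b) = s(u,v) → b ∈ FNbr p a := by
    intro a b hab
    rw [mem_FNbr]
    refine ⟨(hsymm a b hab).symm, ?_, ?_⟩ <;> rw [hab] <;> assumption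
  -- degree bound
  have hdeg : ∀ a b : Fin n, s(a,b) = s(u,v) → (Nbr p.M a).card ≤ (n-2)/q := by
    intro a b hab
    have hbF := hbFN a b hab
    rcases hd a with h | h
    · rw [h] at hbF; simp at hbF
    · have hds := deg_sum p hMB a
      have hc1 : 1 ≤ (FNbr p a).card := Finset.card_pos.mpr ⟨b, hbF⟩
      have hkey : (Nbr p.M a).card * q ≤ n - 2 := by
        have heq : (Nbr p.M a).card * q
            = (q-1) * (Nbr p.M a).card + (Nbr p.M a).card := by
          cases q with
          | zero => omega
          | succ q' => simp [Nat.succ_sub_one, Nat.mul_succ, Nat.mul_comm]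
        omega
      exact (Nat.le_div_iff_mul_le (by omega)).mpr hkey
  -- deficient vertices are among u, v
  have hdefsub : univ.filter (Deficient q P1) ⊆ {u, v} := by
    intro x hx
    have hdefx := (Finset.mem_filter.mp hx).2
    by_contra hmem
    simp only [Finset.mem_insert, Finset.mem_singleton, not_or] at hmem
    rw [Deficient, hMNx x hmem.1 hmem.2] at hdefx
    rcases hd x with h | h
    · obtain ⟨y, hy⟩ := hdefx.1
      have : y ∈ FNbr p x := by
        rw [mem_FNbr] at hy ⊢
        refine ⟨hy.1, fun hc => hy.2.1 (Finset.mem_insert_of_mem hc), hy.2.2⟩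
      rw [h] at this; simp at this
    · exact absurd h (Nat.not_le.mpr hdefx.2)
  -- vertices of open closings
  have hOCsub : OCverts P1 ⊆ ({u, v} : Finset (Fin n)) ∪ Nbr p.M u ∪ Nbr p.M v := by
    have hside : ∀ a x y : Fin n, x ≠ y → s(a,x) = s(u,v) → s(a,y) ∈ P1.M →
        s(x,y) ∉ p.B →
        ∀ z ∈ (s(x,y) : Sym2 (Fin n)), z ∈ ({u, v} : Finset (Fin n)) ∪ Nbr p.M u ∪ Nbr p.M v := by
      intro a x y hxy hax hay hnB z hz
      have hay' : s(a,y) ∈ p.M := by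
        rcases Finset.mem_insert.mp hay with h | h
        · rw [← hax] at h
          rcases Sym2.eq_iff.mp h with ⟨-, h1⟩ | ⟨h1, h2⟩
          · exact absurd h1.symm hxy
          · rw [h1] at hax
            exact absurd (hsymm x x (by rw [← h1] at hax ⊢; exact hax)) (fun hc => hc rfl)
        · exact h
      have hya : y ≠ a := (neq_of_memM ⟨hMB, hMb, hBb, hch, hd⟩ hay').symm
      rcases Sym2.eq_iff.mp hax with ⟨rfl, rfl⟩ | ⟨rfl, rfl⟩
      · -- a = u, x = v
        rcases Sym2.mem_iff.mp hz with rfl | rfl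
        · exact Finset.mem_union.mpr (Or.inl (Finset.mem_union.mpr (Or.inl (by simp))))
        · refine Finset.mem_union.mpr (Or.inl (Finset.mem_union.mpr (Or.inr ?_)))
          rw [mem_Nbr]; exact ⟨hya, hay'⟩
      · -- a = v, x = u
        rcases Sym2.mem_iff.mp hz with rfl | rfl
        · exact Finset.mem_union.mpr (Or.inl (Finset.mem_union.mpr (Or.inl (by simp))))
        · refine Finset.mem_union.mpr (Or.inr ?_)
          rw [mem_Nbr]; exact ⟨hya, hay'⟩
    intro z hz
    rw [OCverts, Finset.mem_filter] at hz
    obtain ⟨-, c, hc, hzc⟩ := hz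
    obtain ⟨hcb, hcM, hcB, a, x, y, hxy, rfl, h1, h2⟩ := Finset.mem_filter.mp hc
    rcases Finset.mem_insert.mp h1 with h1' | h1'
    · exact hside a x y hxy h1' h2 hcB z hzc
    · rcases Finset.mem_insert.mp h2 with h2' | h2'
      · refine hside a y x hxy.symm h2' (Finset.mem_insert_of_mem h1') ?_ z ?_
        · rw [Sym2.eq_swap]; exact hcB
        · rw [Sym2.eq_swap]; exact hzc
      · exact absurd (hch a x y hxy h1' h2') hcB
  -- the clique is small
  have hWsub : Wset q P1 ⊆ (({u, v} : Finset (Fin n)) ∪ Nbr p.M u ∪ Nbr p.M v)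
      ∪ FxSet q P1 u ∪ FxSet q P1 v := by
    rw [Wset]
    apply Finset.union_subset
    · intro z hz
      exact Finset.mem_union.mpr (Or.inl (Finset.mem_union.mpr (Or.inl (hOCsub hz))))
    · apply Finset.biUnion_subset.mpr
      intro x hx
      have hx2 := hdefsub hx
      rcases Finset.mem_insert.mp hx2 with rfl | hx3
      · intro z hz
        rcases Finset.mem_insert.mp hz with rfl | hz2
        · apply Finset.mem_union.mpr (Or.inl (Finset.mem_union.mpr (Or.inl
            (Finset.mem_union.mpr (Or.inl (Finset.mem_union.mpr (Or.inl (by simp))))))))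
        · exact Finset.mem_union.mpr (Or.inl (Finset.mem_union.mpr (Or.inr hz2)))
      · rw [Finset.mem_singleton] at hx3
        subst hx3
        intro z hz
        rcases Finset.mem_insert.mp hz with rfl | hz2
        · apply Finset.mem_union.mpr (Or.inl (Finset.mem_union.mpr (Or.inl
            (Finset.mem_union.mpr (Or.inl (Finset.mem_union.mpr (Or.inl (by simp))))))))
        · exact Finset.mem_union.mpr (Or.inr hz2)
  have hWcard : (Wset q P1).card ≤ m := by
    have h1 := Finset.card_le_card hWsub
    have h2 := Finset.card_union_le ((({u, v} : Finset (Fin n)) ∪ Nbr p.M u ∪ Nbr p.M v)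
      ∪ FxSet q P1 u) (FxSet q P1 v)
    have h3 := Finset.card_union_le (({u, v} : Finset (Fin n)) ∪ Nbr p.M u ∪ Nbr p.M v)
      (FxSet q P1 u)
    have h4 := Finset.card_union_le (({u, v} : Finset (Fin n)) ∪ Nbr p.M u) (Nbr p.M v)
    have h5 := Finset.card_union_le ({u, v} : Finset (Fin n)) (Nbr p.M u)
    have h6 : ({u, v} : Finset (Fin n)).card ≤ 2 := Finset.card_insert_le _ _ |>.trans (by simp)
    have h7 := FxSet_card_le q P1 u
    have h8 := FxSet_card_le q P1 v
    have h9 := hdeg u v rfl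
    have h10 := hdeg v u (Sym2.eq_swap)
    omega
  have hSfilter : S = (board n).filter
      (fun e => e ∉ P1.M ∧ e ∉ P1.B ∧ ∀ z ∈ e, z ∈ Wset q P1) := by
    rw [hSdef, bstrat, if_pos hWcard]
  have hSmem : ∀ c : Sym2 (Fin n), c ∈ board n → c ∉ P1.M → c ∉ p.B →
      (∀ z ∈ c, z ∈ Wset q P1) → c ∈ S := by
    intro c h1 h2 h3 h4
    rw [hSfilter, Finset.mem_filter]
    exact ⟨h1, h2, h3, h4⟩
  -- all open closings get claimed
  have hOCS : OCset P1 ⊆ S := by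
    intro c hc
    have hcf := Finset.mem_filter.mp hc
    apply hSmem c hcf.1 hcf.2.1 hcf.2.2.1
    intro z hz
    apply Finset.mem_union.mpr (Or.inl _)
    rw [OCverts, Finset.mem_filter]
    exact ⟨Finset.mem_univ _, c, hc, hz⟩
  have hp' : Inv q p := ⟨hMB, hMb, hBb, hch, hd⟩
  -- closing edges of new cherries get claimed
  have hclose : ∀ a b w : Fin n, s(a,b) = s(u,v) → w ≠ a → w ≠ b →
      s(a,w) ∈ p.M → s(b,w) ∈ p.B ∪ S := by
    intro a b w hab hwa hwb hawM
    by_cases hB : s(b,w) ∈ p.B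
    · exact Finset.mem_union.mpr (Or.inl hB)
    apply Finset.mem_union.mpr (Or.inr _)
    apply hOCS
    rw [OCset, Finset.mem_filter]
    have hbw : b ≠ w := hwb.symm
    refine ⟨?_, ?_, hB, a, b, w, hbw, rfl, ?_, Finset.mem_insert_of_mem hawM⟩
    · simp [board, Sym2.mk_isDiag_iff, hbw]
    · -- s(b,w) ∉ P1.M
      intro hc
      rcases Finset.mem_insert.mp hc with hc | hc
      · rw [← hab] at hc
        rcases Sym2.eq_iff.mp hc with ⟨h1, h2⟩ | ⟨h1, h2⟩
        · exact hwb h2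
        · exact hwa h2
      · exact heB (hab ▸ cherry_closed hp' (hsymm a b hab) hawM hc)
    · rw [hab]; exact Finset.mem_insert_self _ _
  refine ⟨?_, ?_, ?_, ?_, ?_⟩
  · -- disjointness
    intro e' he'
    rcases Finset.mem_union.mp he' with h | h
    · intro hc
      rcases Finset.mem_insert.mp hc with hc | hc
      · exact heB (hc ▸ h)
      · exact hMB e' h hc
    · exact (bstrat_free q m P1 e' h).1
  · -- M in board
    exact Finset.insert_subset hbd hMb
  · -- B in board
    exact Finset.union_subset hBb (bstrat_subset q m P1)
  · -- cherries closed
    intro a x y hxy h1 h2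
    rcases Finset.mem_insert.mp h1 with h1' | h1'
    · rcases Finset.mem_insert.mp h2 with h2' | h2'
      · exfalso
        rw [← h2'] at h1'
        rcases Sym2.eq_iff.mp h1' with ⟨-, h⟩ | ⟨h3, h4⟩
        · exact hxy h
        · exact hxy (h4.trans h3)
      · -- s(a,x) = e, s(a,y) ∈ p.M
        exact hclose a x y h1' ((neq_of_memM hp' h2').symm) hxy.symm h2'
    · rcases Finset.mem_insert.mp h2 with h2' | h2'
      · rw [Sym2.eq_swap (a := x)]
        exact hclose a y x h2' ((neq_of_memM hp' h1').symm) hxy h1'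
      · exact Finset.mem_union.mpr (Or.inl (hch a x y hxy h1' h2'))
  · -- degree invariant
    have hFxS : ∀ a : Fin n, Deficient q P1 a → ∀ y ∈ FxSet q P1 a, s(a,y) ∈ S := by
      intro a hdef y hy
      have hyF' := FxSet_subset q P1 a hy
      rw [mem_FNbr] at hyF'
      apply hSmem
      · rw [board, Finset.mem_filter]
        exact ⟨Finset.mem_univ _, by rw [Sym2.mk_isDiag_iff]; exact fun h => hyF'.1 h.symm⟩
      · exact hyF'.2.1
      · exact hyF'.2.2
      · intro z hz
        have haW : a ∈ Wset q P1 :=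
          Finset.mem_union.mpr (Or.inr (Finset.mem_biUnion.mpr
            ⟨a, Finset.mem_filter.mpr ⟨Finset.mem_univ _, hdef⟩, Finset.mem_insert_self _ _⟩))
        have hyW : y ∈ Wset q P1 :=
          Finset.mem_union.mpr (Or.inr (Finset.mem_biUnion.mpr
            ⟨a, Finset.mem_filter.mpr ⟨Finset.mem_univ _, hdef⟩, Finset.mem_insert_of_mem hy⟩))
        rcases Sym2.mem_iff.mp hz with rfl | rfl
        exacts [haW, hyW]
    have keyd : ∀ a b : Fin n, s(a,b) = s(u,v) →
        (FNbr ⟨P1.M, p.B ∪ S⟩ a = ∅ ∨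
          (q-1) * (Nbr P1.M a).card ≤ (Nbr (p.B ∪ S) a).card) := by
      intro a b hab
      have hNa := hMN a b hab
      have hbF := hbFN a b hab
      have hbnM : b ∉ Nbr p.M a := by
        rw [mem_Nbr]
        rintro ⟨-, hmm⟩
        exact heM (hab ▸ hmm)
      have hcard1 : (Nbr P1.M a).card = (Nbr p.M a).card + 1 := by
        rw [hNa, Finset.card_insert_of_notMem hbnM]
      have hFN21 : FNbr ⟨P1.M, p.B ∪ S⟩ a ⊆ FNbr P1 a := by
        intro y hy
        rw [mem_FNbr] at hy ⊢
        exact ⟨hy.1, hy.2.1, fun hc => hy.2.2 (Finset.mem_union.mpr (Or.inl hc))⟩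
      by_cases hdef : Deficient q P1 a
      · by_cases hsm : (FNbr P1 a).card ≤ q - 1
        · left
          rw [Finset.eq_empty_iff_forall_notMem]
          intro y hy
          have hy1 := hFN21 hy
          rw [← FxSet_small hsm] at hy1
          have hyS := hFxS a hdef y hy1
          rw [mem_FNbr] at hy
          exact hy.2.2 (Finset.mem_union.mpr (Or.inr hyS))
        · right
          have hFx := FxSet_card_big hsm
          have hsub2 : Nbr p.B a ∪ FxSet q P1 a ⊆ Nbr (p.B ∪ S) a := by
            intro y hy
            rcases Finset.mem_union.mp hy with h | h
            · exact Nbr_mono Finset.subset_union_left a h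
            · rw [mem_Nbr]
              have hyF := FxSet_subset q P1 a h
              rw [mem_FNbr] at hyF
              exact ⟨hyF.1, Finset.mem_union.mpr (Or.inr (hFxS a hdef y h))⟩
          have hdisj : Disjoint (Nbr p.B a) (FxSet q P1 a) := by
            rw [Finset.disjoint_left]
            intro y hy hc
            have hyF := FxSet_subset q P1 a hc
            rw [mem_FNbr] at hyF
            exact hyF.2.2 (mem_Nbr.mp hy).2
          have hcard2 := Finset.card_le_card hsub2
          rw [Finset.card_union_of_disjoint hdisj, hFx] at hcard2
          rcases hd a with h | h
          · rw [h] at hbF; simp at hbF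
          · rw [hcard1, Nat.mul_succ]
            omega
      · rw [Deficient, not_and_or] at hdef
        rcases hdef with h | h
        · left
          rw [Finset.not_nonempty_iff_eq_empty] at h
          exact Finset.subset_empty.mp (h ▸ hFN21)
        · right
          rw [Nat.not_lt] at h
          exact h.trans (Finset.card_le_card (Nbr_mono Finset.subset_union_left a))
    intro x
    by_cases hxu : x = u
    · subst hxu; exact keyd x v rfl
    by_cases hxv : x = v
    · subst hxv; exact keyd x u Sym2.eq_swap
    have hNx := hMNx x hxu hxv
    rcases hd x with h | h
    · left
      rw [Finset.eq_empty_iff_forall_notMem]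
      intro y hy
      rw [mem_FNbr] at hy
      have hmem : y ∈ FNbr p x := mem_FNbr.mpr ⟨hy.1,
        fun hc => hy.2.1 (Finset.mem_insert_of_mem hc),
        fun hc => hy.2.2 (Finset.mem_union.mpr (Or.inl hc))⟩
      rw [h] at hmem; simp at hmem
    · right
      rw [hNx]
      exact h.trans (Finset.card_le_card (Nbr_mono Finset.subset_union_left x))

lemma inv_init (q : ℕ) : Inv q (⟨∅, ∅⟩ : MBPos n) := by
  refine ⟨by simp, by simp, by simp, by simp, fun x => Or.inr ?_⟩
  have h1 : Nbr (∅ : Finset (Sym2 (Fin n))) x = ∅ := by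
    rw [Finset.eq_empty_iff_forall_notMem]; intro y hy; simpa [Nbr] using hy
  rw [h1]
  simp

lemma arith (n m : ℕ) (hn : 3 ≤ n) (h : 4 * Real.sqrt n ≤ m) :
    ∃ q : ℕ, 1 ≤ q ∧ 2 * ((n-2)/q) + 2*q ≤ m := by
  set s := Nat.sqrt (n-2) with hs
  have hs1 : 1 ≤ s := by
    rw [hs]
    have h12 : 1 ≤ n - 2 := by omega
    calc 1 = Nat.sqrt 1 := by simp
    _ ≤ Nat.sqrt (n-2) := Nat.sqrt_le_sqrt h12
  have h1 : s^2 ≤ n - 2 := Nat.sqrt_le' (n-2)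
  have h2 : n - 2 < (s+1)^2 := Nat.lt_succ_sqrt' (n-2)
  have hcast : ((n - 2 : ℕ) : ℝ) = (n : ℝ) - 2 := by
    rw [Nat.cast_sub (by omega)]; norm_num
  have hm1 : 4*s < m := by
    have hsr : (s:ℝ) < Real.sqrt n := by
      rw [Real.lt_sqrt (by positivity)]
      have hc1 : ((s^2 : ℕ) : ℝ) ≤ ((n - 2 : ℕ) : ℝ) := by exact_mod_cast h1
      rw [hcast] at hc1
      push_cast at hc1 ⊢
      linarith
    have hlt : ((4*s : ℕ):ℝ) < (m:ℝ) := by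
      push_cast
      linarith
    exact_mod_cast hlt
  by_cases hc : n - 2 < s*s + s
  · refine ⟨s+1, by omega, ?_⟩
    have hdiv : (n-2)/(s+1) ≤ s - 1 := by
      have hlt : (n-2)/(s+1) < s := by
        rw [Nat.div_lt_iff_lt_mul (by omega)]
        have : s * (s+1) = s*s + s := by ring
        omega
      omega
    omega
  · refine ⟨s+1, by omega, ?_⟩
    have hn2 : s*s + s + 2 ≤ n := by omega
    have hm2 : 4*s + 1 < m := by
      have h16 : ((4*s+1 : ℕ):ℝ)^2 < 16*(n:ℝ) := by
        have hc2 : ((s*s + s + 2 : ℕ) : ℝ) ≤ (n:ℝ) := by exact_mod_cast hn2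
        push_cast at hc2 ⊢
        nlinarith
      have hsr : ((4*s+1 : ℕ):ℝ) < 4 * Real.sqrt n := by
        have hsq := Real.sq_sqrt (show (0:ℝ) ≤ (n:ℝ) by positivity)
        have hnn := Real.sqrt_nonneg (n:ℝ)
        have hpos : (0:ℝ) ≤ ((4*s+1 : ℕ):ℝ) := Nat.cast_nonneg _
        nlinarith [sq_nonneg (((4*s+1 : ℕ):ℝ) - 4 * Real.sqrt n)]
      have hlt : ((4*s+1 : ℕ):ℝ) < (m:ℝ) := lt_of_lt_of_le hsr h
      exact_mod_cast hlt
    have hdiv : (n-2)/(s+1) ≤ s := by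
      have hlt : (n-2)/(s+1) < s+1 := by
        rw [Nat.div_lt_iff_lt_mul (by omega)]
        have : (s+1) * (s+1) = (s+1)^2 := by ring
        omega
      omega
    omega

end CBT

/-- In the `(1:K_m)`-biased triangle game on `K_n` (Maker moving first),
if `m ≥ 4√n` then Breaker has a winning strategy. -/

theorem clique_bias_triangle_breaker (n m : ℕ)
    (h : 4 * Real.sqrt (n : ℝ) ≤ (m : ℝ)) :
    BreakerWinsMF (n := n) (CliqueBias m) TriangleWin := by
  by_cases hn : n ≤ 2
  · refine ⟨fun _ => ∅, fun p => ⟨Finset.empty_subset _, by simp, ⟨∅, by simp, by simp⟩⟩, ?_⟩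
    rintro ms t ⟨a, b, c, hab, hac, hbc, -, -, -⟩
    have hcard : ({a, b, c} : Finset (Fin n)).card ≤ n := by
      simpa using Finset.card_le_univ ({a, b, c} : Finset (Fin n))
    rw [Finset.card_insert_of_notMem (by simp [hab, hac]),
      Finset.card_insert_of_notMem (by simp [hbc]), Finset.card_singleton] at hcard
    omega
  · push_neg at hn
    obtain ⟨q, hq, hm⟩ := CBT.arith n m (by omega) h
    refine ⟨CBT.bstrat q m, fun p =>
      ⟨CBT.bstrat_subset q m p, CBT.bstrat_free q m p, CBT.bstrat_bias q m p⟩, ?_⟩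
    intro ms t
    have hplay : ∀ k, CBT.Inv q (playMF ms (CBT.bstrat q m) (2*k)) := by
      intro k
      induction k with
      | zero => exact CBT.inv_init q
      | succ k ih =>
        have h1 : 2*(k+1) = (2*k+1)+1 := by ring
        have hmod : (2*k+1) % 2 = 1 := by omega
        have hmod0 : (2*k) % 2 = 0 := by omega
        have e1 : playMF ms (CBT.bstrat q m) (2*k+1+1)
            = breakerMove (playMF ms (CBT.bstrat q m) (2*k+1))
                (CBT.bstrat q m (playMF ms (CBT.bstrat q m) (2*k+1))) := by
          rw [playMF]
          simp [hmod]
        have e2 : playMF ms (CBT.bstrat q m) (2*k+1)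
            = makerMove (playMF ms (CBT.bstrat q m) (2*k))
                (ms (playMF ms (CBT.bstrat q m) (2*k))) := by
          rw [playMF]
          simp [hmod0]
        rw [h1, e1, e2]
        exact CBT.step q m hq hm _ ih _
    rcases Nat.even_or_odd t with ⟨k, hk⟩ | ⟨k, hk⟩
    · have ht : t = 2*k := by omega
      rw [ht]
      exact CBT.tri_free_of_inv (hplay k)
    · have hmod0 : (2*k) % 2 = 0 := by omega
      have ht : t = 2*k+1 := by omega
      have e2 : playMF ms (CBT.bstrat q m) (2*k+1)
          = makerMove (playMF ms (CBT.bstrat q m) (2*k))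
              (ms (playMF ms (CBT.bstrat q m) (2*k))) := by
        rw [playMF]
        simp [hmod0]
      rw [ht, e2]
      exact CBT.tri_free_maker (hplay k) _
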